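/- Let Θ̂ be a symmetric m×m matrix with spectral decomposition Θ̂ = U D Uᵀ, D = diag(λ₁ ≤ … ≤ λ_m), λ₁ < 0, and let Θ be symmetric positive semidefinite. Define Θ̂₊ = U D₊ Uᵀ with D₊ = diag(max(λ_i, ε)) for some 0 < ε ≤ -λ₁. Then ‖Θ̂₊ - Θ‖₂ ≤ 3‖Θ̂ - Θ‖₂. -/

import Mathlib

open Matrix
open scoped Matrix.Norms.L2Operator RealInnerProductSpace

/-- The ℓ₂ → ℓ₂ operator (spectral) norm of a real square matrix. -/
noncomputable def opNorm {m : ℕ} (M : Matrix (Fin m) (Fin m) ℝ) : ℝ :=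
  ‖Matrix.toEuclideanCLM (𝕜 := ℝ) M‖

lemma opNorm_eq_norm {m : ℕ} (M : Matrix (Fin m) (Fin m) ℝ) : opNorm M = ‖M‖ := rfl

lemma l2_norm_diagonal_le {m : ℕ} (d : Fin m → ℝ) (C : ℝ) (hC : 0 ≤ C)
    (h : ∀ i, |d i| ≤ C) : ‖Matrix.diagonal d‖ ≤ C := by
  rw [Matrix.l2_opNorm_def]
  refine ContinuousLinearMap.opNorm_le_bound _ hC fun x => ?_
  simp only [LinearEquiv.trans_apply, LinearMap.coe_toContinuousLinearMap']
  have key : toEuclideanLin (Matrix.diagonal d) x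
      = (WithLp.equiv 2 (Fin m → ℝ)).symm (fun i => d i * x i) := by
    rw [Matrix.toEuclideanLin_apply]
    congr 1
    ext i
    simp [Matrix.mulVec_diagonal]
  rw [key, EuclideanSpace.norm_eq, EuclideanSpace.norm_eq]
  rw [show C * Real.sqrt (∑ i, ‖x i‖ ^ 2) = Real.sqrt (C ^ 2 * ∑ i, ‖x i‖ ^ 2) by
    rw [Real.sqrt_mul (sq_nonneg C), Real.sqrt_sq hC]]
  apply Real.sqrt_le_sqrt
  rw [Finset.mul_sum]
  refine Finset.sum_le_sum fun i _ => ?_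
  simp only [WithLp.equiv_symm_apply, PiLp.toLp_apply, Real.norm_eq_abs, abs_mul, mul_pow]
  exact mul_le_mul_of_nonneg_right
    (pow_le_pow_left₀ (abs_nonneg _) (h i) 2) (sq_nonneg _)

lemma neg_eig_le_l2_norm {m : ℕ} (A Θ : Matrix (Fin m) (Fin m) ℝ) (hΘ : Θ.PosSemidef)
    (v : EuclideanSpace ℝ (Fin m)) (hv : ‖v‖ = 1) (c : ℝ)
    (heig : A *ᵥ (WithLp.equiv 2 (Fin m → ℝ) v) = c • (WithLp.equiv 2 (Fin m → ℝ) v))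
    (hc : c < 0) : -c ≤ ‖A - Θ‖ := by
  set v' : Fin m → ℝ := WithLp.equiv 2 (Fin m → ℝ) v with hv'
  set w : EuclideanSpace ℝ (Fin m) := (WithLp.equiv 2 (Fin m → ℝ)).symm ((A - Θ) *ᵥ v') with hw
  have h1 : ‖w‖ ≤ ‖A - Θ‖ * ‖v‖ := Matrix.l2_opNorm_mulVec (A - Θ) v
  have hq : 0 ≤ v' ⬝ᵥ (Θ *ᵥ v') := by
    have := hΘ.re_dotProduct_nonneg v'
    simpa using this
  have hvv : v' ⬝ᵥ v' = 1 := by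
    have h := real_inner_self_eq_norm_sq v
    rw [EuclideanSpace.inner_eq_star_dotProduct] at h
    simpa [hv', hv] using h
  have hinner : (inner ℝ v w : ℝ) = c - v' ⬝ᵥ (Θ *ᵥ v') := by
    rw [EuclideanSpace.inner_eq_star_dotProduct]
    simp only [hw, star_trivial, Equiv.apply_symm_apply]
    change ((A - Θ) *ᵥ v') ⬝ᵥ v' = _
    rw [dotProduct_comm, Matrix.sub_mulVec, dotProduct_sub, heig, dotProduct_smul]
    simp [hvv]
  have h2 : -c ≤ |(inner ℝ v w : ℝ)| := by
    rw [hinner, abs_of_nonpos (by linarith)]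
    linarith
  calc -c ≤ |(inner ℝ v w : ℝ)| := h2
    _ ≤ ‖v‖ * ‖w‖ := abs_real_inner_le_norm v w
    _ = ‖w‖ := by rw [hv, one_mul]
    _ ≤ ‖A - Θ‖ := by rw [hv, mul_one] at h1; exact h1


/-- Projecting a symmetric matrix with smallest eigenvalue `λ₁ < 0` onto matrices with
eigenvalues `≥ ε` (`0 < ε ≤ -λ₁`) at most triples the spectral-norm error to any
positive semidefinite matrix `Θ`. -/
theorem stmt_12 {m : ℕ} (Θhat Θ : Matrix (Fin m) (Fin m) ℝ)
    (U : Matrix (Fin m) (Fin m) ℝ) (hU : U ∈ Matrix.orthogonalGroup (Fin m) ℝ)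
    (lam : Fin m → ℝ) (hmono : Monotone lam)
    (hdecomp : Θhat = U * Matrix.diagonal lam * Uᵀ)
    (hm : 0 < m) (hneg : lam ⟨0, hm⟩ < 0)
    (hΘ : Θ.PosSemidef)
    (ε : ℝ) (hε : 0 < ε) (heps : ε ≤ -lam ⟨0, hm⟩)
    (Θplus : Matrix (Fin m) (Fin m) ℝ)
    (hplus : Θplus = U * Matrix.diagonal (fun i => max (lam i) ε) * Uᵀ) :
    opNorm (Θplus - Θ) ≤ 3 * opNorm (Θhat - Θ) := by
  simp only [opNorm_eq_norm]
  set k : Fin m := ⟨0, hm⟩ with hk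
  have hstar : star U = Uᵀ := by
    ext i j; simp [Matrix.star_apply]
  have hUU : star U * U = 1 := (Matrix.mem_orthogonalGroup_iff' (Fin m) ℝ).mp hU
  -- lower bound: -lam k ≤ ‖Θhat - Θ‖
  set e : Fin m → ℝ := Pi.single k 1 with he
  set v : EuclideanSpace ℝ (Fin m) := (WithLp.equiv 2 (Fin m → ℝ)).symm (U *ᵥ e) with hv
  have hv' : WithLp.equiv 2 (Fin m → ℝ) v = U *ᵥ e := by simp [hv]
  have hcol : U *ᵥ e = fun i => U i k := by
    funext i; simp [he, Matrix.mulVec_single]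
  have hsum : ∑ i, U i k * U i k = 1 := by
    have h := congrFun (congrFun hUU k) k
    simpa [Matrix.mul_apply, Matrix.one_apply, Matrix.star_apply] using h
  have hvnorm : ‖v‖ = 1 := by
    rw [EuclideanSpace.norm_eq]
    have : ∀ i : Fin m, ‖v i‖ ^ 2 = U i k * U i k := by
      intro i
      have : v i = U i k := by rw [hv, hcol]; rfl
      rw [this, Real.norm_eq_abs, sq_abs, sq, ]
    simp only [this, hsum, Real.sqrt_one]
  have heig : Θhat *ᵥ (WithLp.equiv 2 (Fin m → ℝ) v) = lam k • (WithLp.equiv 2 (Fin m → ℝ) v) := by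
    rw [hv', hdecomp, Matrix.mulVec_mulVec]
    have : U * Matrix.diagonal lam * Uᵀ * U = U * Matrix.diagonal lam := by
      rw [mul_assoc, ← hstar, hUU, mul_one]
    rw [this, ← Matrix.mulVec_mulVec]
    congr 1
    rw [he, Matrix.diagonal_mulVec_single]
    funext i
    simp [Matrix.mulVec_single, Pi.single_apply, mul_comm]
  have hlow : -lam k ≤ ‖Θhat - Θ‖ := neg_eig_le_l2_norm Θhat Θ hΘ v hvnorm (lam k) heig hneg
  -- upper bound on projection error
  have hdiff : Θplus - Θhat = U * Matrix.diagonal (fun i => max (lam i) ε - lam i) * Uᵀ := by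
    rw [hplus, hdecomp, ← Matrix.sub_mul, ← Matrix.mul_sub, Matrix.diagonal_sub]
  have hdiag : ‖Matrix.diagonal (fun i => max (lam i) ε - lam i)‖ ≤ -2 * lam k := by
    apply l2_norm_diagonal_le _ _ (by linarith)
    intro i
    have h1 : lam k ≤ lam i := hmono (Fin.le_def.mpr (Nat.zero_le _))
    rw [abs_of_nonneg (by simp [le_max_left])]
    rcases max_cases (lam i) ε with ⟨h, _⟩ | ⟨h, _⟩ <;> rw [h] <;> linarith
  have hconj : ‖Θplus - Θhat‖ = ‖Matrix.diagonal (fun i => max (lam i) ε - lam i)‖ := by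
    rw [hdiff, ← hstar]
    rw [CStarRing.norm_mul_mem_unitary _ (Unitary.star_mem hU)]
    exact CStarRing.norm_mem_unitary_mul _ hU
  calc ‖Θplus - Θ‖ ≤ ‖Θplus - Θhat‖ + ‖Θhat - Θ‖ := norm_sub_le_norm_sub_add_norm_sub _ _ _
    _ ≤ (-2 * lam k) + ‖Θhat - Θ‖ := by rw [hconj]; linarith [hdiag]
    _ ≤ 2 * ‖Θhat - Θ‖ + ‖Θhat - Θ‖ := by linarith
    _ = 3 * ‖Θhat - Θ‖ := by ring
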